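/- With the tensor-product setup over GF(3): the joint fixed space C_V(d₁) ∩ C_V(d₂) ∩ C_V(d₃) equals the 1-dimensional span of e⊗e⊗e. -/

import Mathlib

set_option maxHeartbeats 2000000
set_option synthInstance.maxHeartbeats 400000

noncomputable section

open TensorProduct

/-- The field `GF(3)`. -/
abbrev F3 := ZMod 3
/-- The 2-dimensional symplectic space `W` over `GF(3)`. -/
abbrev W := Fin 2 → F3
/-- `V = W ⊗ W ⊗ W`. -/
abbrev V := W ⊗[F3] (W ⊗[F3] W)

noncomputable instance : AddCommGroup V := inferInstance

/-- The basis vector `e` of `W`. -/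
def e : W := ![1, 0]
/-- The basis vector `f` of `W`. -/
def f : W := ![0, 1]

/-- The linear automorphism `d` of `W` with `d e = e`, `d f = e + f`. -/
def d : W →ₗ[F3] W := Matrix.toLin' !![1, 1; 0, 1]
/-- The inverse of `d`: `d⁻¹ e = e`, `d⁻¹ f = f - e`. -/
def dinv : W →ₗ[F3] W := Matrix.toLin' !![1, -1; 0, 1]

/-- `d₁ = d ⊗ 1 ⊗ 1`. -/
def d₁ : V →ₗ[F3] V := TensorProduct.map d LinearMap.id
/-- `d₂ = d ⊗ d⁻¹ ⊗ 1`. -/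
def d₂ : V →ₗ[F3] V := TensorProduct.map d (TensorProduct.map dinv LinearMap.id)
/-- `d₃ = d ⊗ d ⊗ d`. -/
def d₃ : V →ₗ[F3] V := TensorProduct.map d (TensorProduct.map d d)

/-- The alternating form `⟨·,·⟩` on `W` with `⟨e,f⟩ = 1 = -⟨f,e⟩`. -/
def ω : LinearMap.BilinForm F3 W := Matrix.toLinearMap₂' F3 !![0, 1; -1, 0]

/-- The form `B` on `V` with `B(v₁⊗v₂⊗v₃, w₁⊗w₂⊗w₃) = ⟨v₁,w₁⟩⟨v₂,w₂⟩⟨v₃,w₃⟩`. -/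
def B : LinearMap.BilinForm F3 V :=
  LinearMap.BilinForm.tmul ω (LinearMap.BilinForm.tmul ω ω)

/-- The fixed space `C_V(g) = ker (g - 1)`. -/
def CV (g : V →ₗ[F3] V) : Submodule F3 V := LinearMap.ker ((g - (LinearMap.id : V →ₗ[F3] V)))
/-- The commutator space `[V,g] = im (g - 1)`. -/
def comm1 (g : V →ₗ[F3] V) : Submodule F3 V := LinearMap.range ((g - (LinearMap.id : V →ₗ[F3] V)))
/-- The iterated commutator space `[V,g,g] = im ((g - 1)²)`. -/
def comm2 (g : V →ₗ[F3] V) : Submodule F3 V :=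
  LinearMap.range (((g - (LinearMap.id : V →ₗ[F3] V)) ∘ₗ (g - (LinearMap.id : V →ₗ[F3] V))))
/-- A subspace `U` is totally isotropic if `B` vanishes identically on `U × U`. -/
def TotallyIsotropic (U : Submodule F3 V) : Prop := ∀ u ∈ U, ∀ v ∈ U, B u v = 0

/-! ### Auxiliary machinery -/

abbrev ι3 := Fin 2 × Fin 2 × Fin 2
def bW : Module.Basis (Fin 2) F3 W := Pi.basisFun F3 (Fin 2)
def bV : Module.Basis ι3 F3 V := bW.tensorProduct (bW.tensorProduct bW)

lemma hd0 : d (bW 0) = bW 0 := by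
  ext i; fin_cases i <;> simp [d, bW, Matrix.mulVec, dotProduct, Fin.sum_univ_two]
lemma hd1 : d (bW 1) = bW 0 + bW 1 := by
  ext i; fin_cases i <;> simp [d, bW, Matrix.mulVec, dotProduct, Fin.sum_univ_two]
lemma hv0 : dinv (bW 0) = bW 0 := by
  ext i; fin_cases i <;> simp [dinv, bW, Matrix.mulVec, dotProduct, Fin.sum_univ_two]
lemma hv1 : dinv (bW 1) = bW 1 - bW 0 := by
  ext i; fin_cases i <;> simp [dinv, bW, Matrix.mulVec, dotProduct, Fin.sum_univ_two]
lemma he : e = bW 0 := by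
  ext i; fin_cases i <;> simp [e, bW]

lemma bVapply (i j k : Fin 2) : bV (i,j,k) = bW i ⊗ₜ[F3] (bW j ⊗ₜ[F3] bW k) := by
  simp [bV, Module.Basis.tensorProduct_apply]

def DD : Matrix (Fin 2) (Fin 2) F3 := !![1,1;0,1]
def DV : Matrix (Fin 2) (Fin 2) F3 := !![1,-1;0,1]
def I2 : Matrix (Fin 2) (Fin 2) F3 := !![1,0;0,1]
def M1 : Matrix ι3 ι3 F3 :=
  Matrix.of fun p q => DD p.1 q.1 * I2 p.2.1 q.2.1 * I2 p.2.2 q.2.2 - (if p = q then 1 else 0)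
def M2 : Matrix ι3 ι3 F3 :=
  Matrix.of fun p q => DD p.1 q.1 * DV p.2.1 q.2.1 * I2 p.2.2 q.2.2 - (if p = q then 1 else 0)
def M3 : Matrix ι3 ι3 F3 :=
  Matrix.of fun p q => DD p.1 q.1 * DD p.2.1 q.2.1 * DD p.2.2 q.2.2 - (if p = q then 1 else 0)

set_option maxHeartbeats 2000000 in
set_option synthInstance.maxHeartbeats 200000 in
lemma mat1 : LinearMap.toMatrix bV bV (d₁ - (LinearMap.id : V →ₗ[F3] V)) = M1 := by
  ext p q
  rw [LinearMap.toMatrix_apply]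
  obtain ⟨i, j, k⟩ := p
  obtain ⟨i', j', k'⟩ := q
  fin_cases i' <;> fin_cases j' <;> fin_cases k' <;>
    (rw [bVapply];
     simp only [LinearMap.sub_apply, LinearMap.id_apply, d₁, TensorProduct.map_tmul,
       LinearMap.id_coe, id_eq, add_tmul, tmul_add, sub_tmul, tmul_sub, map_add, map_sub,
       Finsupp.coe_add, Finsupp.coe_sub, Pi.add_apply, Pi.sub_apply]) <;>
    fin_cases i <;> fin_cases j <;> fin_cases k <;>
    simp [hd0, hd1, hv0, hv1, bV, Module.Basis.tensorProduct_repr_tmul_apply, Module.Basis.repr_self,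
      Finsupp.single_apply, M1, M2, M3, DD, DV, I2, -Prod.mk_zero_zero, -Prod.mk_one_one,
      Prod.ext_iff]

set_option maxHeartbeats 2000000 in
set_option synthInstance.maxHeartbeats 200000 in
lemma mat2 : LinearMap.toMatrix bV bV (d₂ - (LinearMap.id : V →ₗ[F3] V)) = M2 := by
  ext p q
  rw [LinearMap.toMatrix_apply]
  obtain ⟨i, j, k⟩ := p
  obtain ⟨i', j', k'⟩ := q
  fin_cases i' <;> fin_cases j' <;> fin_cases k' <;>
    (rw [bVapply];
     simp only [LinearMap.sub_apply, LinearMap.id_apply, d₂, TensorProduct.map_tmul,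
       LinearMap.id_coe, id_eq, hd0, hd1, hv0, hv1, add_tmul, tmul_add, sub_tmul, tmul_sub,
       map_add, map_sub,
       Finsupp.coe_add, Finsupp.coe_sub, Pi.add_apply, Pi.sub_apply]) <;>
    fin_cases i <;> fin_cases j <;> fin_cases k <;>
    simp [hd0, hd1, hv0, hv1, bV, Module.Basis.tensorProduct_repr_tmul_apply, Module.Basis.repr_self,
      Finsupp.single_apply, M1, M2, M3, DD, DV, I2, -Prod.mk_zero_zero, -Prod.mk_one_one,
      Prod.ext_iff]

set_option maxHeartbeats 2000000 in
set_option synthInstance.maxHeartbeats 200000 in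
lemma mat3 : LinearMap.toMatrix bV bV (d₃ - (LinearMap.id : V →ₗ[F3] V)) = M3 := by
  ext p q
  rw [LinearMap.toMatrix_apply]
  obtain ⟨i, j, k⟩ := p
  obtain ⟨i', j', k'⟩ := q
  fin_cases i' <;> fin_cases j' <;> fin_cases k' <;>
    (rw [bVapply];
     simp only [LinearMap.sub_apply, LinearMap.id_apply, d₃, TensorProduct.map_tmul,
       LinearMap.id_coe, id_eq, hd0, hd1, hv0, hv1, add_tmul, tmul_add, sub_tmul, tmul_sub,
       map_add, map_sub,
       Finsupp.coe_add, Finsupp.coe_sub, Pi.add_apply, Pi.sub_apply]) <;>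
    fin_cases i <;> fin_cases j <;> fin_cases k <;>
    simp [hd0, hd1, hv0, hv1, bV, Module.Basis.tensorProduct_repr_tmul_apply, Module.Basis.repr_self,
      Finsupp.single_apply, M1, M2, M3, DD, DV, I2, -Prod.mk_zero_zero, -Prod.mk_one_one,
      Prod.ext_iff]

lemma mem_CV_iff (g : V →ₗ[F3] V) (M : Matrix ι3 ι3 F3)
    (hM : LinearMap.toMatrix bV bV (g - (LinearMap.id : V →ₗ[F3] V)) = M) (v : V) :
    v ∈ CV g ↔ M.mulVec ⇑(bV.repr v) = 0 := by
  rw [CV, LinearMap.mem_ker, ← hM]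
  constructor
  · intro h
    rw [LinearMap.toMatrix_mulVec_repr, h, map_zero]
    rfl
  · intro h
    rw [LinearMap.toMatrix_mulVec_repr] at h
    have h2 : bV.repr ((g - (LinearMap.id : V →ₗ[F3] V)) v) = 0 := DFunLike.coe_injective h
    exact (LinearEquiv.map_eq_zero_iff _).mp h2

lemma heee : e ⊗ₜ[F3] (e ⊗ₜ[F3] e) = bV (0,0,0) := by rw [bVapply, he]

lemma fix1 : d₁ (bV (0,0,0)) = bV (0,0,0) := by
  rw [bVapply]; simp [d₁, hd0]
lemma fix2 : d₂ (bV (0,0,0)) = bV (0,0,0) := by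
  rw [bVapply]; simp [d₂, hd0, hv0]
lemma fix3 : d₃ (bV (0,0,0)) = bV (0,0,0) := by
  rw [bVapply]; simp [d₃, hd0]

/-- **Lemma 3.1(vii).** The joint fixed space `C_V(d₁) ∩ C_V(d₂) ∩ C_V(d₃)` equals the
1-dimensional span of `e⊗e⊗e`. -/
theorem stmt_9 :
    CV d₁ ⊓ CV d₂ ⊓ CV d₃ = Submodule.span F3 {e ⊗ₜ[F3] (e ⊗ₜ[F3] e)} ∧
    Module.finrank F3 (CV d₁ ⊓ CV d₂ ⊓ CV d₃ : Submodule F3 V) = 1 := by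
  have key : CV d₁ ⊓ CV d₂ ⊓ CV d₃ = Submodule.span F3 {e ⊗ₜ[F3] (e ⊗ₜ[F3] e)} := by
    apply le_antisymm
    · intro v hv
      rw [Submodule.mem_inf, Submodule.mem_inf] at hv
      obtain ⟨⟨h1, h2⟩, h3⟩ := hv
      rw [mem_CV_iff d₁ M1 mat1 v] at h1
      rw [mem_CV_iff d₂ M2 mat2 v] at h2
      rw [mem_CV_iff d₃ M3 mat3 v] at h3
      set x : ι3 → F3 := ⇑(bV.repr v) with hx
      -- derive coordinate vanishing
      have e100 := congrFun h1 (0,0,0)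
      have e101 := congrFun h1 (0,0,1)
      have e110 := congrFun h1 (0,1,0)
      have e111 := congrFun h1 (0,1,1)
      have e200 := congrFun h2 (0,0,0)
      have e201 := congrFun h2 (0,0,1)
      have e300 := congrFun h3 (0,0,0)
      simp only [Matrix.mulVec, dotProduct, Fintype.sum_prod_type, Fin.sum_univ_two,
        M1, M2, M3, DD, DV, I2, Matrix.of_apply, Matrix.cons_val', Matrix.cons_val_zero,
        Matrix.cons_val_one, Matrix.head_cons, Matrix.empty_val', Matrix.cons_val_fin_one,
        Matrix.head_fin_const, Pi.zero_apply, Prod.mk.injEq, and_self, and_true, and_false,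
        if_true, if_false, Fin.isValue] at e100 e101 e110 e111 e200 e201 e300
      norm_num at e100 e101 e110 e111 e200 e201 e300
      rw [heee, Submodule.mem_span_singleton]
      refine ⟨x (0,0,0), ?_⟩
      apply bV.repr.injective
      rw [LinearEquiv.map_smul, Module.Basis.repr_self]
      ext p
      obtain ⟨i, j, k⟩ := p
      fin_cases i <;> fin_cases j <;> fin_cases k <;>
        simp only [Finsupp.smul_single, smul_eq_mul, mul_one, Finsupp.single_apply,
          ← hx, Prod.mk.injEq, and_self, and_true, and_false, if_true, if_false] <;>
        simp <;>
        first
          | linear_combination -e100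
          | linear_combination -e101
          | linear_combination -e110
          | linear_combination -e111
          | linear_combination e200 - e100 + e110
          | linear_combination e201 - e101 + e111
          | linear_combination -e300 - e200 - e201 + 2*e100 + 2*e101
    · rw [Submodule.span_le, Set.singleton_subset_iff, heee]
      refine ⟨⟨?_, ?_⟩, ?_⟩
      · show _ ∈ LinearMap.ker (d₁ - (LinearMap.id : V →ₗ[F3] V))
        rw [LinearMap.mem_ker, LinearMap.sub_apply, LinearMap.id_apply, fix1, sub_self]
      · show _ ∈ LinearMap.ker (d₂ - (LinearMap.id : V →ₗ[F3] V))
        rw [LinearMap.mem_ker, LinearMap.sub_apply, LinearMap.id_apply, fix2, sub_self]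
      · show _ ∈ LinearMap.ker (d₃ - (LinearMap.id : V →ₗ[F3] V))
        rw [LinearMap.mem_ker, LinearMap.sub_apply, LinearMap.id_apply, fix3, sub_self]
  refine ⟨key, ?_⟩
  rw [key]
  refine finrank_span_singleton ?_
  rw [heee]
  exact bV.ne_zero _
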